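/- Let R_I be the root subsystem of a reduced crystallographic root system R spanned by the simple roots {α_i : i ∈ I}, lying in the subspace U = Span{α_i∨ : i ∈ I}, and let π₁ : V → U be the orthogonal projection. Then π₁(P∨) equals the coweight lattice of R_I, where P∨ is the coweight lattice of R. -/

import Mathlib

open scoped InnerProductSpace

noncomputable section

structure RootSystemData (V : Type) [NormedAddCommGroup V] [InnerProductSpace ℝ V] (n : ℕ) where
  R : Set V
  α : Fin n → V
  finite : R.Finite
  root_ne_zero : ∀ β ∈ R, β ≠ (0 : V)
  reduced : ∀ β ∈ R, ∀ t : ℝ, t • β ∈ R → t = 1 ∨ t = -1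
  reflect_mem : ∀ β ∈ R, ∀ γ ∈ R, γ - (2 * ⟪γ, β⟫_ℝ / ⟪β, β⟫_ℝ) • β ∈ R
  cryst : ∀ β ∈ R, ∀ γ ∈ R, ∃ k : ℤ, 2 * ⟪γ, β⟫_ℝ / ⟪β, β⟫_ℝ = (k : ℝ)
  simple_mem : ∀ i, α i ∈ R
  indep : LinearIndependent ℝ α
  spanning : Submodule.span ℝ (Set.range α) = ⊤
  base : ∀ β ∈ R, (∃ c : Fin n → ℝ, (∀ i, 0 ≤ c i) ∧ β = ∑ i, c i • α i) ∨
      (∃ c : Fin n → ℝ, (∀ i, c i ≤ 0) ∧ β = ∑ i, c i • α i)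

namespace RootSystemData

variable {V : Type} [NormedAddCommGroup V] [InnerProductSpace ℝ V] {n : ℕ}
variable (D : RootSystemData V n)

def coroot (i : Fin n) : V := (2 / ⟪D.α i, D.α i⟫_ℝ) • D.α i

def IsSimpleReflection (i : Fin n) (g : V ≃ₗ[ℝ] V) : Prop :=
  ∀ v, g v = v - (2 * ⟪v, D.α i⟫_ℝ / ⟪D.α i, D.α i⟫_ℝ) • D.α i

def WK (K : Set (Fin n)) : Subgroup (V ≃ₗ[ℝ] V) :=
  Subgroup.closure {g | ∃ i ∈ K, D.IsSimpleReflection i g}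

def W : Subgroup (V ≃ₗ[ℝ] V) := D.WK Set.univ

def C : Set V := {x | ∀ i, 0 < ⟪x, D.α i⟫_ℝ}

def closedC : Set V := {x | ∀ i, 0 ≤ ⟪x, D.α i⟫_ℝ}

def orbit (K : Set (Fin n)) (a : V) : Set V := {x | ∃ g ∈ D.WK K, g a = x}

def F (a : V) (i : Fin n) : Set V := convexHull ℝ (D.orbit {i}ᶜ a)

def P (a : V) : Set V := convexHull ℝ (D.orbit Set.univ a)

def H (i : Fin n) : Set V := {x | ⟪x, D.α i⟫_ℝ = 0}

end RootSystemData

/-- The orthogonal projection `π₁` of the coweight lattice `P∨` of `R` onto the subspace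
`U = Span{α_i∨ : i ∈ I}` equals the coweight lattice of the root subsystem `R_I`,
i.e. the set of `u ∈ U` with `⟨u, α_i⟩ ∈ ℤ` for all `i ∈ I`. -/
theorem stmt_19 {V : Type} [NormedAddCommGroup V] [InnerProductSpace ℝ V]
    [FiniteDimensional ℝ V] {n : ℕ}
    (D : RootSystemData V n) (I : Set (Fin n)) :
    (fun v : V => (Submodule.orthogonalProjectionOnto (Submodule.span ℝ (D.α '' I)) v : V)) ''
        {v : V | ∀ i, ∃ k : ℤ, ⟪v, D.α i⟫_ℝ = (k : ℝ)}
      = {u : V | u ∈ Submodule.span ℝ (D.α '' I) ∧ ∀ i ∈ I, ∃ k : ℤ, ⟪u, D.α i⟫_ℝ = (k : ℝ)} := by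
  classical
  set U := Submodule.span ℝ (D.α '' I) with hU
  ext u
  constructor
  · rintro ⟨v, hv, rfl⟩
    refine ⟨(Submodule.orthogonalProjectionOnto U v).2, ?_⟩
    intro i hi
    obtain ⟨k, hk⟩ := hv i
    refine ⟨k, ?_⟩
    have hαi : D.α i ∈ U := Submodule.subset_span ⟨i, hi, rfl⟩
    have hperp : v - (Submodule.orthogonalProjectionOnto U v : V) ∈ Uᗮ :=
      U.sub_starProjection_mem_orthogonal v
    have h0 : ⟪D.α i, v - (Submodule.orthogonalProjectionOnto U v : V)⟫_ℝ = 0 :=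
      (Submodule.mem_orthogonal _ _).1 hperp _ hαi
    rw [inner_sub_right] at h0
    show ⟪(Submodule.orthogonalProjectionOnto U v : V), D.α i⟫_ℝ = (k : ℝ)
    have h0' : ⟪D.α i, (Submodule.orthogonalProjectionOnto U v : V)⟫_ℝ = ⟪D.α i, v⟫_ℝ := by linarith
    rw [real_inner_comm, h0', real_inner_comm, hk]
  · rintro ⟨huU, hint⟩
    have hsp : ⊤ ≤ Submodule.span ℝ (Set.range D.α) := by rw [D.spanning]
    let B : Module.Basis (Fin n) ℝ V := Module.Basis.mk D.indep hsp
    set c : Fin n → ℝ := fun i => if i ∈ I then ⟪u, D.α i⟫_ℝ else 0 with hc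
    set v : V := (InnerProductSpace.toDual ℝ V).symm (LinearMap.toContinuousLinearMap (B.constr ℝ c)) with hvdef
    have hv : ∀ i, ⟪v, D.α i⟫_ℝ = c i := by
      intro i
      have h1 : ⟪v, D.α i⟫_ℝ = (B.constr ℝ c) (D.α i) :=
        InnerProductSpace.toDual_symm_apply
      have h2 : D.α i = B i := (Module.Basis.mk_apply D.indep hsp i).symm
      rw [h1, h2, Module.Basis.constr_basis]
    have hvu : v - u ∈ Uᗮ := by
      rw [Submodule.mem_orthogonal']
      intro w hw
      induction hw using Submodule.span_induction with
      | mem w hw =>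
        obtain ⟨j, hj, rfl⟩ := hw
        rw [inner_sub_left, hv j, hc]
        simp only [hj, if_true]
        rw [real_inner_comm]
        ring
      | zero => simp
      | add x y hx hy ihx ihy => rw [inner_add_right, ihx, ihy]; ring
      | smul t x hx ih => rw [inner_smul_right, ih]; ring
    refine ⟨v, ?_, ?_⟩
    · intro i
      by_cases hi : i ∈ I
      · obtain ⟨k, hk⟩ := hint i hi
        exact ⟨k, by rw [hv i, hc]; simp [hi, hk]⟩
      · exact ⟨0, by rw [hv i, hc]; simp [hi]⟩
    · show (Submodule.orthogonalProjectionOnto U v : V) = u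
      have hsplit : v = u + (v - u) := by abel
      rw [hsplit, map_add,
        Submodule.orthogonalProjectionOnto_apply_of_mem_orthogonal hvu]
      have : (Submodule.orthogonalProjectionOnto U u : V) = u := Submodule.starProjection_eq_self_iff.mpr huU
      push_cast
      rw [this]
      simp
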